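/- For every integer k ≥ 2 and every positive integer n, one has f_{(σ,k)}(n) = Σ a·τ_k(b), where the sum runs over all pairs (a, b) of positive integers with a^k·b = n, and σ is the sum-of-divisors function. -/

import Mathlib

open Finset

/-- The set of ordered `k`-tuples of positive integers whose product is `n`. -/
def piltzTuples (k n : ℕ) : Finset (Fin k → ℕ) :=
  (Fintype.piFinset fun _ => n.divisors).filter fun d => ∏ i, d i = n

/-- The Piltz divisor function `τ_k(n)`: the number of ordered `k`-tuples of positive
integers with product `n`. -/
def piltzTau (k n : ℕ) : ℕ := (piltzTuples k n).card

/-- `f_{(g,k)}(n) = ∑_{d₁⋯d_k = n} g(gcd(d₁,…,d_k))` (ℕ-valued version). -/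
def fgkNat (g : ℕ → ℕ) (k n : ℕ) : ℕ :=
  ∑ d ∈ piltzTuples k n, g (Finset.univ.gcd d)

lemma mem_piltzTuples {k n : ℕ} (hn : n ≠ 0) {d : Fin k → ℕ} :
    d ∈ piltzTuples k n ↔ ∏ i, d i = n := by
  simp only [piltzTuples, mem_filter, Fintype.mem_piFinset, Nat.mem_divisors]
  constructor
  · exact fun h => h.2
  · intro h
    exact ⟨fun i => ⟨h ▸ Finset.dvd_prod_of_mem d (mem_univ i), hn⟩, h⟩

lemma card_filter_dvd {k n a : ℕ} (hn : n ≠ 0) (ha : a ≠ 0) (hak : a ^ k ∣ n) :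
    ((piltzTuples k n).filter fun d => ∀ i, a ∣ d i).card = piltzTau k (n / a ^ k) := by
  have hnk : n / a ^ k ≠ 0 := by
    have := Nat.div_pos (Nat.le_of_dvd (Nat.pos_of_ne_zero hn) hak)
      (pow_pos (Nat.pos_of_ne_zero ha) k)
    omega
  have hakne : a ^ k ≠ 0 := pow_ne_zero k ha
  rw [piltzTau]
  apply Finset.card_nbij' (fun d i => d i / a) (fun e i => a * e i)
  · intro d hd
    rw [Finset.mem_coe, mem_filter, mem_piltzTuples hn] at hd
    rw [Finset.mem_coe, mem_piltzTuples hnk]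
    have h1 : ∏ i, d i = a ^ k * ∏ i, d i / a := by
      calc ∏ i, d i = ∏ i, a * (d i / a) :=
            Finset.prod_congr rfl fun i _ => (Nat.mul_div_cancel' (hd.2 i)).symm
        _ = (∏ _i : Fin k, a) * ∏ i, d i / a := Finset.prod_mul_distrib
        _ = a ^ k * ∏ i, d i / a := by simp
    rw [← hd.1, h1, Nat.mul_div_cancel_left _ (Nat.pos_of_ne_zero hakne)]
  · intro e he
    rw [Finset.mem_coe, mem_piltzTuples hnk] at he
    rw [Finset.mem_coe, mem_filter, mem_piltzTuples hn]
    refine ⟨?_, fun i => Dvd.intro _ rfl⟩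
    rw [Finset.prod_mul_distrib, he]
    simp [Nat.mul_div_cancel' hak]
  · intro d hd
    rw [Finset.mem_coe, mem_filter] at hd
    funext i
    exact Nat.mul_div_cancel' (hd.2 i)
  · intro e _
    funext i
    exact Nat.mul_div_cancel_left _ (Nat.pos_of_ne_zero ha)

theorem stmt8 (k : ℕ) (hk : 2 ≤ k) (n : ℕ) (hn : 0 < n) :
    fgkNat (fun m => ∑ d ∈ m.divisors, d) k n =
      ∑ p ∈ (n.divisors ×ˢ n.divisors).filter fun p => p.1 ^ k * p.2 = n,
        p.1 * piltzTau k p.2 := by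
  have hn' : n ≠ 0 := hn.ne'
  -- rewrite RHS as a sum over a ∈ divisors with a^k ∣ n
  have hRHS : (∑ p ∈ (n.divisors ×ˢ n.divisors).filter fun p => p.1 ^ k * p.2 = n,
        p.1 * piltzTau k p.2)
      = ∑ a ∈ n.divisors.filter fun a => a ^ k ∣ n, a * piltzTau k (n / a ^ k) := by
    apply Finset.sum_nbij' (fun p => p.1) (fun a => (a, n / a ^ k))
    · intro p hp
      rw [mem_filter, mem_product] at hp
      rw [mem_filter]
      exact ⟨hp.1.1, ⟨p.2, hp.2.symm⟩⟩
    · intro a ha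
      rw [mem_filter] at ha
      have ha0 : a ≠ 0 := (Nat.pos_of_mem_divisors ha.1).ne'
      have hak : a ^ k ≠ 0 := pow_ne_zero k ha0
      rw [mem_filter, mem_product]
      refine ⟨⟨ha.1, Nat.mem_divisors.2 ⟨Nat.div_dvd_of_dvd ha.2, hn'⟩⟩, ?_⟩
      exact Nat.mul_div_cancel' ha.2
    · intro p hp
      rw [mem_filter, mem_product] at hp
      have h1 : p.1 ^ k ≠ 0 := by
        intro h
        rw [h, zero_mul] at hp
        exact hn' hp.2.symm
      have : n / p.1 ^ k = p.2 := by
        rw [← hp.2, Nat.mul_div_cancel_left _ (Nat.pos_of_ne_zero h1)]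
      simp [this]
    · intro a _; rfl
    · intro p hp
      rw [mem_filter, mem_product] at hp
      have h1 : p.1 ^ k ≠ 0 := by
        intro h
        rw [h, zero_mul] at hp
        exact hn' hp.2.symm
      have : n / p.1 ^ k = p.2 := by
        rw [← hp.2, Nat.mul_div_cancel_left _ (Nat.pos_of_ne_zero h1)]
      rw [this]
  rw [hRHS]
  -- now work on LHS
  rw [fgkNat]
  have key : ∀ d ∈ piltzTuples k n,
      (∑ e ∈ (Finset.univ.gcd d).divisors, e)
        = ∑ a ∈ n.divisors, if ∀ i, a ∣ d i then a else 0 := by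
    intro d hd
    rw [← Finset.sum_filter]
    apply Finset.sum_congr _ fun _ _ => rfl
    ext a
    rw [Nat.mem_divisors, mem_filter, Nat.mem_divisors, Finset.dvd_gcd_iff]
    have hprod := (mem_piltzTuples hn' (d := d)).1 hd
    have i0 : Fin k := ⟨0, by omega⟩
    constructor
    · intro h
      refine ⟨⟨dvd_trans (h.1 i0 (mem_univ i0))
        (hprod ▸ Finset.dvd_prod_of_mem d (mem_univ i0)), hn'⟩,
        fun i => h.1 i (mem_univ i)⟩
    · intro h
      refine ⟨fun i _ => h.2 i, ?_⟩
      intro h0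
      rw [Finset.gcd_eq_zero_iff] at h0
      have hz : d i0 = 0 := h0 _ (mem_univ _)
      rw [← hprod] at hn'
      exact hn' (Finset.prod_eq_zero (mem_univ i0) hz)
  rw [Finset.sum_congr rfl key, Finset.sum_comm]
  have step : ∀ a ∈ n.divisors,
      (∑ d ∈ piltzTuples k n, if ∀ i, a ∣ d i then a else 0)
        = if a ^ k ∣ n then a * piltzTau k (n / a ^ k) else 0 := by
    intro a ha
    have ha0 : a ≠ 0 := (Nat.pos_of_mem_divisors ha).ne'
    rw [← Finset.sum_filter, Finset.sum_const, smul_eq_mul]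
    by_cases hak : a ^ k ∣ n
    · rw [if_pos hak, card_filter_dvd hn' ha0 hak, mul_comm]
    · rw [if_neg hak]
      convert Nat.zero_mul a
      rw [Finset.card_eq_zero, Finset.filter_eq_empty_iff]
      intro d hd hdvd
      exact hak (by
        have hprod := (mem_piltzTuples hn' (d := d)).1 hd
        calc a ^ k = ∏ _i : Fin k, a := by simp
          _ ∣ ∏ i, d i := Finset.prod_dvd_prod_of_dvd _ _ fun i _ => hdvd i
          _ = n := hprod)
  rw [Finset.sum_congr rfl step, Finset.sum_ite, Finset.sum_const_zero, add_zero]
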